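/- Let (e₁,…,e_n) be an orthonormal basis of X, Ω = e₁∧⋯∧e_n, and ⋆_R M = M⌟Ω, ⋆_L M = Ω⌞M. Then for every M ∈ ⋀X: ⋆_L(⋆_R M) = M and ⋆_R(⋆_L M) = M; moreover ⋆_L(⋆_L M) = ⋆_R(⋆_R M) = M̌, where M̌ denotes the grade involution applied n+1 times (so M̌ = M if n is odd and M̌ = M̂ if n is even). -/

import Mathlib

open scoped RealInnerProductSpace

/-- The blade `v₁ ∧ ⋯ ∧ v_k` in the exterior algebra. -/
noncomputable def expBlade {X : Type*} [AddCommGroup X] [Module ℝ X] {k : ℕ}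
    (v : Fin k → X) : ExteriorAlgebra ℝ X :=
  (List.ofFn fun i => ExteriorAlgebra.ι ℝ (v i)).prod

set_option linter.unusedSectionVars false
set_option maxHeartbeats 1000000


namespace Stmt8
section Lists
variable {α : Type*} [LinearOrder α] [DecidableEq α]

theorem nodup_of_sorted {l : List α} (h : l.Pairwise (· < ·)) : l.Nodup :=
  h.imp ne_of_lt

theorem sorted_ext {l₁ l₂ : List α} (h₁ : l₁.Pairwise (· < ·)) (h₂ : l₂.Pairwise (· < ·))
    (h : ∀ a, a ∈ l₁ ↔ a ∈ l₂) : l₁ = l₂ := by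
  haveI : IsAntisymm α (· < ·) := ⟨fun a b h h' => absurd h' (lt_asymm h)⟩
  exact List.Perm.eq_of_pairwise (fun a b _ _ h h' => absurd h' (lt_asymm h)) h₁ h₂
    ((List.perm_ext_iff_of_nodup (nodup_of_sorted h₁) (nodup_of_sorted h₂)).2 h)

theorem idx_sorted : ∀ {l : List α}, l.Pairwise (· < ·) → ∀ {j}, j ∈ l →
    l.idxOf j = (l.filter (· < j)).length := by
  intro l
  induction l with
  | nil => intro _ j hj; simp at hj
  | cons a l ih =>
    intro hl j hj
    obtain ⟨h1, h2⟩ := List.pairwise_cons.1 hl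
    rcases List.mem_cons.1 hj with rfl | hj'
    · rw [List.idxOf_cons_self]
      have hf : (l.filter (· < j)) = [] := by
        apply List.filter_eq_nil_iff.2
        intro x hx
        simpa using not_lt_of_gt (h1 x hx)
      simp [List.filter_cons, hf]
    · have haj : a < j := h1 j hj'
      rw [List.idxOf_cons_ne _ (ne_of_lt haj), ih h2 hj']
      simp [List.filter_cons, haj, Nat.add_comm]

theorem len_split : ∀ {l : List α}, l.Pairwise (· < ·) → ∀ {j}, j ∈ l →
    l.length = (l.filter (· < j)).length + 1 + (l.filter (j < ·)).length := by
  intro l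
  induction l with
  | nil => intro _ j hj; simp at hj
  | cons a l ih =>
    intro hl j hj
    obtain ⟨h1, h2⟩ := List.pairwise_cons.1 hl
    rcases List.mem_cons.1 hj with rfl | hj'
    · have hf : (l.filter (· < j)) = [] := by
        apply List.filter_eq_nil_iff.2
        intro x hx
        simpa using not_lt_of_gt (h1 x hx)
      have hg : (l.filter (j < ·)) = l := by
        apply List.filter_eq_self.2
        intro x hx
        simpa using h1 x hx
      simp [List.filter_cons, hf, hg, Nat.add_comm]
    · have haj : a < j := h1 j hj'
      have := ih h2 hj'
      have h3 : ¬ (j < a) := not_lt_of_gt haj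
      simp only [List.filter_cons, List.length_cons]
      simp [haj, h3]
      omega

theorem part_count {c : List α} {j : α} (hj : j ∉ c) :
    (c.filter (· < j)).length + (c.filter (j < ·)).length = c.length := by
  induction c with
  | nil => simp
  | cons a c ih =>
    have haj : a ≠ j := by rintro rfl; exact hj (List.mem_cons_self)
    have h := ih (fun h => hj (List.mem_cons_of_mem _ h))
    rcases lt_or_gt_of_ne haj with h1 | h1
    · simp [List.filter_cons, h1, not_lt_of_gt h1]; omega
    · simp [List.filter_cons, h1, not_lt_of_gt h1]; omega

theorem sum_map_add {β : Type*} (l : List β) (f g : β → ℕ) :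
    (l.map fun x => f x + g x).sum = (l.map f).sum + (l.map g).sum := by
  induction l with
  | nil => simp
  | cons a l ih => simp [ih]; omega

theorem sum_map_ite (c : List α) (p : α → Prop) [DecidablePred p] :
    (c.map fun x => if p x then 1 else 0).sum = (c.filter (fun x => decide (p x))).length := by
  induction c with
  | nil => simp
  | cons a c ih =>
    by_cases h : p a <;> simp [List.filter_cons, h, ih, Nat.add_comm]

theorem double_count (s c : List α) :
    (s.map fun j => (c.filter (· < j)).length).sum
      = (c.map fun x => (s.filter (x < ·)).length).sum := by
  induction s with
  | nil => simp
  | cons j s ih =>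
    have hstep : ∀ x : α, ((j :: s).filter (x < ·)).length
        = (if x < j then 1 else 0) + (s.filter (x < ·)).length := by
      intro x
      by_cases h : x < j <;> simp [List.filter_cons, h, Nat.add_comm]
    simp only [hstep]
    rw [sum_map_add, ← ih, sum_map_ite]
    simp [List.map_cons]

theorem diff_filter {t : List α} (ht : t.Nodup) (s : List α) :
    t.diff s = t.filter (fun x => decide (x ∉ s)) :=
  List.Nodup.diff_eq_filter ht

theorem filter_mem_eq {t l : List α} (ht : t.Pairwise (· < ·)) (hl : l.Pairwise (· < ·))
    (hsub : l ⊆ t) : t.filter (fun x => decide (x ∈ l)) = l := by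
  apply sorted_ext (ht.sublist (List.filter_sublist)) hl
  intro a
  simp only [List.mem_filter, decide_eq_true_eq]
  exact ⟨fun h => h.2, fun h => ⟨hsub h, h⟩⟩

theorem double_diff {t l : List α} (ht : t.Pairwise (· < ·)) (hl : l.Pairwise (· < ·))
    (hsub : l ⊆ t) : t.diff (t.diff l) = l := by
  rw [diff_filter (nodup_of_sorted ht), diff_filter (nodup_of_sorted ht)]
  rw [show (t.filter fun x => decide (x ∉ t.filter fun x => decide (x ∉ l)))
      = t.filter (fun x => decide (x ∈ l)) from List.filter_congr ?_]
  · exact filter_mem_eq ht hl hsub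
  · intro x hx
    simp [List.mem_filter, hx]

theorem filt_len (t : List α) (p : α → Bool) :
    (t.filter p).length + (t.filter (fun x => !(p x))).length = t.length := by
  induction t with
  | nil => simp
  | cons a t ih =>
    cases h : p a <;> simp [List.filter_cons, h] <;> omega

theorem len_add {t l : List α} (ht : t.Pairwise (· < ·)) (hl : l.Pairwise (· < ·))
    (hsub : l ⊆ t) : l.length + (t.diff l).length = t.length := by
  have h1 : t.diff l = t.filter (fun x => !(decide (x ∈ l))) := by
    rw [diff_filter (nodup_of_sorted ht)]
    exact List.filter_congr (by intro x hx; simp)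
  rw [h1]
  nth_rewrite 1 [← filter_mem_eq ht hl hsub]
  exact filt_len t _

theorem erase_diff_comm {t : List α} (ht : t.Nodup) (s : List α) (j : α) :
    (t.erase j).diff s = (t.diff s).erase j := by
  rw [List.Nodup.erase_eq_filter ht, diff_filter (ht.filter _),
    diff_filter ht, List.Nodup.erase_eq_filter (ht.filter _),
    List.filter_filter, List.filter_filter]
  exact List.filter_congr (by intro x hx; simp [Bool.and_comm])

/-- number of inversions of `s` against `c` -/
def Finv (s c : List α) : ℕ := (s.map fun j => (c.filter (· < j)).length).sum

def Ginv (s c : List α) : ℕ := (s.map fun j => (c.filter (j < ·)).length).sum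

theorem Finv_eq_Ginv (s c : List α) : Finv s c = Ginv c s :=
  double_count s c

theorem FG_total {s c : List α} (h : ∀ j ∈ s, j ∉ c) :
    Finv s c + Ginv s c = s.length * c.length := by
  rw [Finv, Ginv, ← sum_map_add]
  have : (s.map fun x => (c.filter (· < x)).length + (c.filter (x < ·)).length)
      = s.map fun _ => c.length := by
    apply List.map_congr_left
    intro a ha
    exact part_count (h a ha)
  rw [this, List.map_const', List.sum_replicate, smul_eq_mul]

end Lists

section Alg

variable {X : Type*} [NormedAddCommGroup X] [InnerProductSpace ℝ X] [FiniteDimensional ℝ X]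
    {n : ℕ} (e : OrthonormalBasis (Fin n) ℝ X)
    (ginv : ExteriorAlgebra ℝ X →ₐ[ℝ] ExteriorAlgebra ℝ X)
    (hginv : ∀ v : X, ginv (ExteriorAlgebra.ι ℝ v) = - ExteriorAlgebra.ι ℝ v)
    (lc : X → ExteriorAlgebra ℝ X →ₗ[ℝ] ExteriorAlgebra ℝ X)
    (hlc_one : ∀ v : X, lc v 1 = 0)
    (hlc_vec : ∀ v w : X, lc v (ExteriorAlgebra.ι ℝ w) = algebraMap ℝ (ExteriorAlgebra ℝ X) ⟪v, w⟫)
    (hlc_mul : ∀ (v : X) (M N : ExteriorAlgebra ℝ X),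
      lc v (M * N) = lc v M * N + ginv M * lc v N)
    (rc : X → ExteriorAlgebra ℝ X →ₗ[ℝ] ExteriorAlgebra ℝ X)
    (hrc_one : ∀ v : X, rc v 1 = 0)
    (hrc_vec : ∀ v w : X, rc v (ExteriorAlgebra.ι ℝ w) = algebraMap ℝ (ExteriorAlgebra ℝ X) ⟪v, w⟫)
    (hrc_mul : ∀ (v : X) (M N : ExteriorAlgebra ℝ X),
      rc v (M * N) = M * rc v N + rc v M * ginv N)

/-- The blade of a list of basis indices. -/
noncomputable def blade (l : List (Fin n)) : ExteriorAlgebra ℝ X :=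
  (l.map fun i => ExteriorAlgebra.ι ℝ (e i)).prod

@[simp] theorem blade_nil : blade e ([] : List (Fin n)) = 1 := rfl

theorem blade_cons (j : Fin n) (l : List (Fin n)) :
    blade e (j :: l) = ExteriorAlgebra.ι ℝ (e j) * blade e l := by
  simp [blade]

theorem inner_basis (j i : Fin n) : ⟪e j, e i⟫ = if j = i then (1:ℝ) else 0 :=
  orthonormal_iff_ite.mp e.orthonormal j i

include hginv in
theorem ginv_blade (l : List (Fin n)) :
    ginv (blade e l) = ((-1:ℝ)^l.length) • blade e l := by
  induction l with
  | nil => simp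
  | cons j l ih =>
    rw [blade_cons, map_mul, hginv, ih, List.length_cons, pow_succ,
      mul_smul_comm, neg_mul, smul_neg, mul_neg_one, neg_smul]

include hginv hlc_one hlc_vec hlc_mul in
theorem lc_blade : ∀ l : List (Fin n), l.Nodup → ∀ j : Fin n,
    lc (e j) (blade e l) =
      if j ∈ l then ((-1:ℝ)^(l.idxOf j)) • blade e (l.erase j) else 0 := by
  intro l
  induction l with
  | nil =>
    intro _ j
    simpa using hlc_one (e j)
  | cons i l ih =>
    intro hnd j
    obtain ⟨hi, hl⟩ := List.nodup_cons.1 hnd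
    rw [blade_cons, hlc_mul, hlc_vec, hginv, inner_basis]
    by_cases hji : j = i
    · subst hji
      have hjl : j ∉ l := hi
      rw [ih hl j, if_neg hjl, if_pos rfl]
      simp [List.idxOf_cons_self, List.erase_cons_head, ← Algebra.smul_def]
    · rw [if_neg hji, ih hl j]
      by_cases hjl : j ∈ l
      · rw [if_pos hjl, if_pos (List.mem_cons_of_mem _ hjl)]
        rw [List.idxOf_cons_ne _ (fun h => hji h.symm), List.erase_cons_tail]
        · rw [blade_cons]
          simp only [map_zero, zero_mul, zero_add, neg_mul, mul_smul_comm, pow_succ]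
          rw [smul_neg, mul_neg_one, neg_smul]
        · simpa using fun h => hji h.symm
      · rw [if_neg hjl, if_neg (by simp [hji, hjl])]
        simp
    
include hginv hrc_one hrc_vec hrc_mul in
theorem rc_blade : ∀ l : List (Fin n), l.Nodup → ∀ j : Fin n,
    rc (e j) (blade e l) =
      if j ∈ l then ((-1:ℝ)^(l.length - 1 - l.idxOf j)) • blade e (l.erase j) else 0 := by
  intro l
  induction l with
  | nil =>
    intro _ j
    simpa using hrc_one (e j)
  | cons i l ih =>
    intro hnd j
    obtain ⟨hi, hl⟩ := List.nodup_cons.1 hnd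
    rw [blade_cons, hrc_mul, hrc_vec, inner_basis, ginv_blade e ginv hginv]
    by_cases hji : j = i
    · subst hji
      have hjl : j ∉ l := hi
      rw [ih hl j, if_neg hjl, if_pos (List.mem_cons_self)]
      rw [List.idxOf_cons_self, List.erase_cons_head]
      simp [← Algebra.smul_def, Nat.sub_zero, List.length_cons]
    · rw [if_neg hji, ih hl j]
      by_cases hjl : j ∈ l
      · rw [if_pos hjl, if_pos (List.mem_cons_of_mem _ hjl)]
        rw [List.idxOf_cons_ne _ (fun h => hji h.symm), List.erase_cons_tail
          (by simpa using fun h => hji h.symm)]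
        have hexp : (i::l).length - 1 - (List.idxOf j l).succ = l.length - 1 - List.idxOf j l := by
          simp only [List.length_cons]; omega
        rw [hexp, blade_cons]
        simp [mul_smul_comm]
      · rw [if_neg hjl, if_neg (by simp [hji, hjl])]
        simp

variable (LC : ExteriorAlgebra ℝ X →ₗ[ℝ] ExteriorAlgebra ℝ X →ₗ[ℝ] ExteriorAlgebra ℝ X)
    (hLC_one : ∀ N : ExteriorAlgebra ℝ X, LC 1 N = N)
    (hLC_mul : ∀ (v : X) (M N : ExteriorAlgebra ℝ X),
      LC (ExteriorAlgebra.ι ℝ v * M) N = LC M (lc v N))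
    (RC : ExteriorAlgebra ℝ X →ₗ[ℝ] ExteriorAlgebra ℝ X →ₗ[ℝ] ExteriorAlgebra ℝ X)
    (hRC_one : ∀ N : ExteriorAlgebra ℝ X, RC N 1 = N)
    (hRC_mul : ∀ (v : X) (M N : ExteriorAlgebra ℝ X),
      RC N (ExteriorAlgebra.ι ℝ v * M) = rc v (RC N M))

/-- iterated left contraction -/
noncomputable def Lfold (l : List (Fin n)) (N : ExteriorAlgebra ℝ X) : ExteriorAlgebra ℝ X :=
  l.foldl (fun N i => lc (e i) N) N

/-- iterated right contraction -/
noncomputable def Rfold (l : List (Fin n)) (N : ExteriorAlgebra ℝ X) : ExteriorAlgebra ℝ X :=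
  l.foldr (fun i N => rc (e i) N) N

theorem Lfold_nil (N : ExteriorAlgebra ℝ X) : Lfold e lc [] N = N := rfl

theorem Lfold_cons (j : Fin n) (l : List (Fin n)) (N : ExteriorAlgebra ℝ X) :
    Lfold e lc (j :: l) N = Lfold e lc l (lc (e j) N) := rfl

theorem Rfold_nil (N : ExteriorAlgebra ℝ X) : Rfold e rc [] N = N := rfl

theorem Rfold_snoc (j : Fin n) (l : List (Fin n)) (N : ExteriorAlgebra ℝ X) :
    Rfold e rc (l ++ [j]) N = Rfold e rc l (rc (e j) N) := by
  simp [Rfold, List.foldr_append]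

theorem Lfold_smul : ∀ (l : List (Fin n)) (r : ℝ) (N : ExteriorAlgebra ℝ X),
    Lfold e lc l (r • N) = r • Lfold e lc l N := by
  intro l
  induction l with
  | nil => intro r N; rfl
  | cons j l ih =>
    intro r N
    rw [Lfold_cons, Lfold_cons, map_smul, ih]

theorem Rfold_smul : ∀ (l : List (Fin n)) (r : ℝ) (N : ExteriorAlgebra ℝ X),
    Rfold e rc l (r • N) = r • Rfold e rc l N := by
  intro l
  induction l with
  | nil => intro r N; rfl
  | cons j l ih =>
    intro r N
    show rc (e j) (Rfold e rc l (r • N)) = r • rc (e j) (Rfold e rc l N)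
    rw [ih, map_smul]

include hLC_one hLC_mul in
theorem LC_blade : ∀ (l : List (Fin n)) (N : ExteriorAlgebra ℝ X),
    LC (blade e l) N = Lfold e lc l N := by
  intro l
  induction l with
  | nil => intro N; exact hLC_one N
  | cons j l ih =>
    intro N
    rw [blade_cons, hLC_mul, ih, Lfold_cons]

include hRC_one hRC_mul in
theorem RC_blade : ∀ (l : List (Fin n)) (N : ExteriorAlgebra ℝ X),
    RC N (blade e l) = Rfold e rc l N := by
  intro l
  induction l with
  | nil => intro N; exact hRC_one N
  | cons j l ih =>
    intro N
    rw [blade_cons, hRC_mul, ih]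
    rfl

include hginv hlc_one hlc_vec hlc_mul in
theorem EA : ∀ (s : List (Fin n)), s.Pairwise (· < ·) → ∀ t : List (Fin n),
    t.Pairwise (· < ·) → s ⊆ t →
    Lfold e lc s (blade e t)
      = ((-1:ℝ)^((s.map fun j => ((t.diff s).filter (· < j)).length).sum))
          • blade e (t.diff s) := by
  intro s
  induction s with
  | nil =>
    intro _ t ht hsub
    simp [Lfold_nil, List.diff_nil]
  | cons j s ih =>
    intro hp t ht hsub
    obtain ⟨hjs, hs⟩ := List.pairwise_cons.1 hp
    have hjt : j ∈ t := hsub (List.mem_cons_self)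
    have hnt : t.Nodup := nodup_of_sorted ht
    rw [Lfold_cons, lc_blade e ginv hginv lc hlc_one hlc_vec hlc_mul t hnt j, if_pos hjt,
      Lfold_smul]
    have het : (t.erase j).Pairwise (· < ·) := List.Pairwise.sublist (List.erase_sublist) ht
    have hsub' : s ⊆ t.erase j := by
      intro x hx
      exact (List.mem_erase_of_ne (ne_of_gt (hjs x hx))).2 (hsub (List.mem_cons_of_mem _ hx))
    rw [ih hs (t.erase j) het hsub']
    have hdc : (t.erase j).diff s = t.diff (j :: s) := (List.diff_cons t s j).symm
    rw [hdc, smul_smul, ← pow_add]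
    congr 2
    rw [idx_sorted ht hjt]
    have hfc : (t.diff (j :: s)).filter (· < j) = t.filter (· < j) := by
      rw [diff_filter hnt, List.filter_filter]
      refine List.filter_congr ?_
      intro x hx
      by_cases hxj : x < j
      · have hxs : x ∉ j :: s := by
          intro hmem
          rcases List.mem_cons.1 hmem with rfl | hmem'
          · exact absurd hxj (lt_irrefl _)
          · exact absurd (hjs x hmem') (not_lt_of_gt hxj)
        simp [hxj, hxs]
      · simp [hxj]
    rw [List.map_cons, List.sum_cons, hfc]

include hginv hrc_one hrc_vec hrc_mul in
theorem EB : ∀ (s : List (Fin n)), s.Pairwise (· < ·) → ∀ t : List (Fin n),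
    t.Pairwise (· < ·) → s ⊆ t →
    Rfold e rc s (blade e t)
      = ((-1:ℝ)^((s.map fun j => ((t.diff s).filter (j < ·)).length).sum))
          • blade e (t.diff s) := by
  intro s
  induction s using List.reverseRecOn with
  | nil =>
    intro _ t ht hsub
    simp [Rfold_nil, List.diff_nil]
  | append_singleton s j ih =>
    intro hp t ht hsub
    obtain ⟨hs, -, hcross⟩ := List.pairwise_append.1 hp
    have hxj : ∀ x ∈ s, x < j := fun x hx => hcross x hx j (List.mem_singleton_self j)
    have hjt : j ∈ t := hsub (List.mem_append_right _ (List.mem_singleton_self j))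
    have hnt : t.Nodup := nodup_of_sorted ht
    rw [Rfold_snoc, rc_blade e ginv hginv rc hrc_one hrc_vec hrc_mul t hnt j, if_pos hjt,
      Rfold_smul]
    have het : (t.erase j).Pairwise (· < ·) := List.Pairwise.sublist (List.erase_sublist) ht
    have hsub' : s ⊆ t.erase j := by
      intro x hx
      exact (List.mem_erase_of_ne (ne_of_lt (hxj x hx))).2 (hsub (List.mem_append_left _ hx))
    rw [ih hs (t.erase j) het hsub']
    have hdc : (t.erase j).diff s = t.diff (s ++ [j]) := by
      rw [List.diff_append, List.diff_cons, List.diff_nil,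
        erase_diff_comm hnt s j]
    rw [hdc, smul_smul, ← pow_add]
    congr 2
    have hexp : t.length - 1 - t.idxOf j = (t.filter (j < ·)).length := by
      rw [idx_sorted ht hjt]
      have := len_split ht hjt
      omega
    rw [hexp]
    have hfc : (t.diff (s ++ [j])).filter (j < ·) = t.filter (j < ·) := by
      rw [diff_filter hnt, List.filter_filter]
      refine List.filter_congr ?_
      intro x hx
      by_cases hxj' : j < x
      · have hxs : x ∉ s ++ [j] := by
          intro hmem
          rcases List.mem_append.1 hmem with hmem' | hmem'
          · exact absurd (hxj x hmem') (not_lt_of_gt hxj')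
          · rw [List.mem_singleton.1 hmem'] at hxj'
            exact absurd hxj' (lt_irrefl _)
        simp [hxj', hxs]
      · simp [hxj']
    rw [List.map_append, List.sum_append]
    simp only [List.map_cons, List.map_nil, List.sum_cons, List.sum_nil, add_zero]
    rw [hfc]
    omega

theorem iota_anticomm (v w : X) :
    ExteriorAlgebra.ι ℝ v * ExteriorAlgebra.ι ℝ w
      = -(ExteriorAlgebra.ι ℝ w * ExteriorAlgebra.ι ℝ v) := by
  have h := ExteriorAlgebra.ι_sq_zero (R := ℝ) (v + w)
  rw [map_add, add_mul, mul_add, mul_add, ExteriorAlgebra.ι_sq_zero,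
    ExteriorAlgebra.ι_sq_zero] at h
  have h2 : ExteriorAlgebra.ι ℝ v * ExteriorAlgebra.ι ℝ w
      + ExteriorAlgebra.ι ℝ w * ExteriorAlgebra.ι ℝ v = 0 := by
    rw [← h]; abel
  exact eq_neg_of_add_eq_zero_left h2

theorem mulP : ∀ (l : List (Fin n)), l.Pairwise (· < ·) → ∀ j : Fin n,
    ∃ (z : ℝ) (m : List (Fin n)), m.Pairwise (· < ·) ∧ (∀ x ∈ m, x ∈ j :: l) ∧
      ExteriorAlgebra.ι ℝ (e j) * blade e l = z • blade e m := by
  intro l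
  induction l with
  | nil =>
    intro _ j
    exact ⟨1, [j], by simp, by simp, by simp [blade_cons]⟩
  | cons a l ih =>
    intro hp j
    obtain ⟨ha, hl⟩ := List.pairwise_cons.1 hp
    rcases lt_trichotomy j a with h | h | h
    · refine ⟨1, j :: a :: l, ?_, fun x hx => hx, by simp [blade_cons, one_smul]⟩
      exact List.pairwise_cons.2 ⟨fun x hx => by
        rcases List.mem_cons.1 hx with rfl | hx'
        · exact h
        · exact lt_trans h (ha x hx'), hp⟩
    · subst h
      refine ⟨0, [], by simp, by simp, ?_⟩
      rw [blade_cons, ← mul_assoc, ExteriorAlgebra.ι_sq_zero, zero_mul, zero_smul]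
    · obtain ⟨z, m, hm, hmem, heq⟩ := ih hl j
      refine ⟨-z, a :: m, ?_, ?_, ?_⟩
      · refine List.pairwise_cons.2 ⟨?_, hm⟩
        intro x hx
        rcases List.mem_cons.1 (hmem x hx) with rfl | hx'
        · exact h
        · exact ha x hx'
      · intro x hx
        rcases List.mem_cons.1 hx with rfl | hx'
        · exact List.mem_cons_of_mem _ (List.mem_cons_self)
        · rcases List.mem_cons.1 (hmem x hx') with rfl | h''
          · exact List.mem_cons_self
          · exact List.mem_cons_of_mem _ (List.mem_cons_of_mem _ h'')
      · rw [blade_cons, ← mul_assoc, iota_anticomm, neg_mul, mul_assoc, heq, blade_cons,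
          mul_smul_comm, ← neg_smul]

/-- the set of blades of increasing lists -/
def bladeSet : Set (ExteriorAlgebra ℝ X) :=
  {x | ∃ l : List (Fin n), l.Pairwise (· < ·) ∧ x = blade e l}

theorem mul_mem_span (j : Fin n) :
    ∀ N ∈ Submodule.span ℝ (bladeSet e), ExteriorAlgebra.ι ℝ (e j) * N
      ∈ Submodule.span ℝ (bladeSet e) := by
  intro N hN
  induction hN using Submodule.span_induction with
  | mem x hx =>
    obtain ⟨l, hl, rfl⟩ := hx
    obtain ⟨z, m, hm, -, heq⟩ := mulP e l hl j
    rw [heq]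
    exact Submodule.smul_mem _ _ (Submodule.subset_span ⟨m, hm, rfl⟩)
  | zero => rw [mul_zero]; exact zero_mem _
  | add x y hx hy ihx ihy => rw [mul_add]; exact add_mem ihx ihy
  | smul r x hx ihx => rw [mul_smul_comm]; exact Submodule.smul_mem _ _ ihx

theorem mul_mem_span' (v : X) :
    ∀ N ∈ Submodule.span ℝ (bladeSet e), ExteriorAlgebra.ι ℝ v * N
      ∈ Submodule.span ℝ (bladeSet e) := by
  intro N hN
  have hv : (ExteriorAlgebra.ι ℝ v : ExteriorAlgebra ℝ X)
      = ∑ i : Fin n, e.repr v i • ExteriorAlgebra.ι ℝ (e i) := by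
    conv_lhs => rw [← OrthonormalBasis.sum_repr e v]
    rw [map_sum]
    simp
  rw [hv, Finset.sum_mul]
  refine Submodule.sum_mem _ ?_
  intro i _
  rw [smul_mul_assoc]
  exact Submodule.smul_mem _ _ (mul_mem_span e i N hN)

theorem span_top (M : ExteriorAlgebra ℝ X) : M ∈ Submodule.span ℝ (bladeSet e) := by
  have h1 : (1 : ExteriorAlgebra ℝ X) ∈ Submodule.span ℝ (bladeSet e) :=
    Submodule.subset_span ⟨[], List.Pairwise.nil, rfl⟩
  have key : ∀ M : ExteriorAlgebra ℝ X, M ∈ Submodule.span ℝ (bladeSet e) ∧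
      ∀ N ∈ Submodule.span ℝ (bladeSet e), M * N ∈ Submodule.span ℝ (bladeSet e) := by
    intro M
    induction M using ExteriorAlgebra.induction with
    | algebraMap r =>
      refine ⟨?_, ?_⟩
      · rw [Algebra.algebraMap_eq_smul_one]
        exact Submodule.smul_mem _ _ h1
      · intro N hN
        rw [← Algebra.smul_def]
        exact Submodule.smul_mem _ _ hN
    | ι x =>
      refine ⟨?_, fun N hN => mul_mem_span' e x N hN⟩
      rw [← mul_one (ExteriorAlgebra.ι ℝ x)]
      exact mul_mem_span' e x 1 h1
    | mul a b iha ihb =>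
      exact ⟨iha.2 b ihb.1, fun N hN => by rw [mul_assoc]; exact iha.2 _ (ihb.2 N hN)⟩
    | add a b iha ihb =>
      exact ⟨add_mem iha.1 ihb.1,
        fun N hN => by rw [add_mul]; exact add_mem (iha.2 N hN) (ihb.2 N hN)⟩
  exact (key M).1

include hginv in
theorem giter_blade (k : ℕ) (l : List (Fin n)) :
    (⇑ginv)^[k] (blade e l) = ((-1:ℝ)^(k * l.length)) • blade e l := by
  induction k with
  | zero => simp
  | succ k ih =>
    rw [Function.iterate_succ_apply', ih, map_smul, ginv_blade e ginv hginv, smul_smul,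
      ← pow_add]
    have : k * l.length + l.length = (k+1) * l.length := by ring
    rw [this]

theorem giter_zero (k : ℕ) : (⇑ginv)^[k] (0 : ExteriorAlgebra ℝ X) = 0 := by
  induction k with
  | zero => rfl
  | succ k ih => rw [Function.iterate_succ_apply', ih, map_zero]

theorem giter_add (k : ℕ) (x y : ExteriorAlgebra ℝ X) :
    (⇑ginv)^[k] (x + y) = (⇑ginv)^[k] x + (⇑ginv)^[k] y := by
  induction k with
  | zero => rfl
  | succ k ih => rw [Function.iterate_succ_apply', Function.iterate_succ_apply',
      Function.iterate_succ_apply', ih, map_add]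

theorem giter_smul (k : ℕ) (r : ℝ) (x : ExteriorAlgebra ℝ X) :
    (⇑ginv)^[k] (r • x) = r • (⇑ginv)^[k] x := by
  induction k with
  | zero => rfl
  | succ k ih => rw [Function.iterate_succ_apply', Function.iterate_succ_apply', ih, map_smul]

include hginv hlc_one hlc_vec hlc_mul hLC_one hLC_mul in
theorem starR_blade (l : List (Fin n)) (hl : l.Pairwise (· < ·)) :
    LC (blade e l) (blade e (List.finRange n))
      = ((-1:ℝ)^(Finv l ((List.finRange n).diff l)))
          • blade e ((List.finRange n).diff l) := by
  rw [LC_blade e lc LC hLC_one hLC_mul,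
    EA e ginv hginv lc hlc_one hlc_vec hlc_mul l hl (List.finRange n)
      (List.pairwise_lt_finRange n) (fun x _ => List.mem_finRange x)]
  rfl

include hginv hrc_one hrc_vec hrc_mul hRC_one hRC_mul in
theorem starL_blade (l : List (Fin n)) (hl : l.Pairwise (· < ·)) :
    RC (blade e (List.finRange n)) (blade e l)
      = ((-1:ℝ)^(Ginv l ((List.finRange n).diff l)))
          • blade e ((List.finRange n).diff l) := by
  rw [RC_blade e rc RC hRC_one hRC_mul,
    EB e ginv hginv rc hrc_one hrc_vec hrc_mul l hl (List.finRange n)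
      (List.pairwise_lt_finRange n) (fun x _ => List.mem_finRange x)]
  rfl

theorem pow_neg_parity (a b : ℕ) (h : a % 2 = b % 2) : ((-1:ℝ))^a = (-1)^b := by
  conv_lhs => rw [← Nat.div_add_mod a 2, pow_add, pow_mul, neg_one_sq, one_pow, one_mul]
  conv_rhs => rw [← Nat.div_add_mod b 2, pow_add, pow_mul, neg_one_sq, one_pow, one_mul]
  rw [h]

end Alg
end Stmt8

/-- the left and right star operators are mutually inverse, and each squares
to the `(n+1)`-fold grade involution. -/
theorem stmt8 {X : Type*} [NormedAddCommGroup X] [InnerProductSpace ℝ X] [FiniteDimensional ℝ X]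
    {n : ℕ} (e : OrthonormalBasis (Fin n) ℝ X)
    -- the grade involution: the unique algebra automorphism with `v̂ = -v` on vectors
    (ginv : ExteriorAlgebra ℝ X →ₐ[ℝ] ExteriorAlgebra ℝ X)
    (hginv : ∀ v : X, ginv (ExteriorAlgebra.ι ℝ v) = - ExteriorAlgebra.ι ℝ v)
    -- the left contraction by a vector, characterized by its defining properties
    (lc : X → ExteriorAlgebra ℝ X →ₗ[ℝ] ExteriorAlgebra ℝ X)
    (hlc_one : ∀ v : X, lc v 1 = 0)
    (hlc_vec : ∀ v w : X, lc v (ExteriorAlgebra.ι ℝ w) = algebraMap ℝ (ExteriorAlgebra ℝ X) ⟪v, w⟫)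
    (hlc_mul : ∀ (v : X) (M N : ExteriorAlgebra ℝ X),
      lc v (M * N) = lc v M * N + ginv M * lc v N)
    -- the right contraction by a vector `N ↦ N⌞v`, characterized by its defining properties
    (rc : X → ExteriorAlgebra ℝ X →ₗ[ℝ] ExteriorAlgebra ℝ X)
    (hrc_one : ∀ v : X, rc v 1 = 0)
    (hrc_vec : ∀ v w : X, rc v (ExteriorAlgebra.ι ℝ w) = algebraMap ℝ (ExteriorAlgebra ℝ X) ⟪v, w⟫)
    (hrc_mul : ∀ (v : X) (M N : ExteriorAlgebra ℝ X),
      rc v (M * N) = M * rc v N + rc v M * ginv N)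
    -- the left contraction `LC M N = M ⌟ N`, extended (bi)linearly in the contractor `M`
    (LC : ExteriorAlgebra ℝ X →ₗ[ℝ] ExteriorAlgebra ℝ X →ₗ[ℝ] ExteriorAlgebra ℝ X)
    (hLC_one : ∀ N : ExteriorAlgebra ℝ X, LC 1 N = N)
    (hLC_vec : ∀ (v : X) (N : ExteriorAlgebra ℝ X), LC (ExteriorAlgebra.ι ℝ v) N = lc v N)
    (hLC_mul : ∀ (v : X) (M N : ExteriorAlgebra ℝ X),
      LC (ExteriorAlgebra.ι ℝ v * M) N = LC M (lc v N))
    -- the right contraction `RC N M = N ⌞ M` (contractee `N`, contractor `M`),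
    -- extended (bi)linearly in the contractor `M`
    (RC : ExteriorAlgebra ℝ X →ₗ[ℝ] ExteriorAlgebra ℝ X →ₗ[ℝ] ExteriorAlgebra ℝ X)
    (hRC_one : ∀ N : ExteriorAlgebra ℝ X, RC N 1 = N)
    (hRC_vec : ∀ (v : X) (N : ExteriorAlgebra ℝ X), RC N (ExteriorAlgebra.ι ℝ v) = rc v N)
    (hRC_mul : ∀ (v : X) (M N : ExteriorAlgebra ℝ X),
      RC N (ExteriorAlgebra.ι ℝ v * M) = rc v (RC N M))
    (M : ExteriorAlgebra ℝ X) :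
    -- Ω = e₁ ∧ ⋯ ∧ e_n, ⋆_R M = M ⌟ Ω = LC M Ω, ⋆_L M = Ω ⌞ M = RC Ω M
    RC (expBlade fun i => e i) (LC M (expBlade fun i => e i)) = M ∧
    LC (RC (expBlade fun i => e i) M) (expBlade fun i => e i) = M ∧
    RC (expBlade fun i => e i) (RC (expBlade fun i => e i) M) = (⇑ginv)^[n + 1] M ∧
    LC (LC M (expBlade fun i => e i)) (expBlade fun i => e i) = (⇑ginv)^[n + 1] M := by
  classical
  have hΩ : expBlade (fun i => e i) = Stmt8.blade e (List.finRange n) := by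
    simp [expBlade, Stmt8.blade, List.ofFn_eq_map]
  have ht₀ : (List.finRange n).Pairwise (· < ·) := List.pairwise_lt_finRange n
  rw [hΩ]
  have hM := Stmt8.span_top e M
  induction hM using Submodule.span_induction with
  | mem x hx =>
    obtain ⟨l, hl, rfl⟩ := hx
    set t₀ : List (Fin n) := List.finRange n with ht₀def
    set c : List (Fin n) := t₀.diff l with hcdef
    have hlt : l ⊆ t₀ := fun x _ => List.mem_finRange x
    have hcp : c.Pairwise (· < ·) := List.Pairwise.sublist (List.diff_sublist _ _) ht₀
    have hdd : t₀.diff c = l := Stmt8.double_diff ht₀ hl hlt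
    have hdisj : ∀ j ∈ l, j ∉ c := by
      intro j hj hjc
      rw [hcdef, Stmt8.diff_filter (Stmt8.nodup_of_sorted ht₀)] at hjc
      simp only [List.mem_filter, decide_eq_true_eq] at hjc
      exact hjc.2 hj
    have hlen : l.length + c.length = n := by
      have h := Stmt8.len_add ht₀ hl hlt
      have hn : t₀.length = n := by rw [ht₀def]; exact List.length_finRange
      rw [hn] at h
      exact h
    have hA := Stmt8.starR_blade e ginv hginv lc hlc_one hlc_vec hlc_mul LC hLC_one hLC_mul l hl
    have hAc := Stmt8.starR_blade e ginv hginv lc hlc_one hlc_vec hlc_mul LC hLC_one hLC_mul c hcp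
    have hB := Stmt8.starL_blade e ginv hginv rc hrc_one hrc_vec hrc_mul RC hRC_one hRC_mul l hl
    have hBc := Stmt8.starL_blade e ginv hginv rc hrc_one hrc_vec hrc_mul RC hRC_one hRC_mul c hcp
    rw [← ht₀def] at hA hAc hB hBc
    rw [← hcdef] at hA hB
    rw [hdd] at hAc hBc
    have hgit := Stmt8.giter_blade e ginv hginv (n+1) l
    refine ⟨?_, ?_, ?_, ?_⟩
    · rw [hA, map_smul, hBc, smul_smul, ← pow_add]
      have h2 : Stmt8.Finv l c + Stmt8.Ginv c l = 2 * Stmt8.Finv l c := by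
        rw [Stmt8.Finv_eq_Ginv]; ring
      rw [h2, pow_mul, neg_one_sq, one_pow, one_smul]
    · rw [hB, map_smul, LinearMap.smul_apply, hAc, smul_smul, ← pow_add]
      have h2 : Stmt8.Ginv l c + Stmt8.Finv c l = 2 * Stmt8.Ginv l c := by
        rw [Stmt8.Finv_eq_Ginv c l]; ring
      rw [h2, pow_mul, neg_one_sq, one_pow, one_smul]
    · rw [hB, map_smul, hBc, smul_smul, ← pow_add, hgit]
      congr 1
      apply Stmt8.pow_neg_parity
      have hsum : Stmt8.Ginv l c + Stmt8.Ginv c l = l.length * c.length := by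
        calc Stmt8.Ginv l c + Stmt8.Ginv c l
            = Stmt8.Finv l c + Stmt8.Ginv l c := by rw [← Stmt8.Finv_eq_Ginv l c]; ring
          _ = l.length * c.length := Stmt8.FG_total hdisj
      rw [hsum]
      have hlen' : l.length + c.length = n := hlen
      revert hlen'
      generalize l.length = p
      generalize c.length = q
      intro hlen'
      rw [← hlen']
      have hid : (p + q + 1) * p = p * q + p * (p + 1) := by ring
      rw [hid]
      obtain ⟨k, hk⟩ := Nat.even_mul_succ_self p
      rw [hk]
      generalize p * q = A
      omega
    · rw [hA, map_smul, LinearMap.smul_apply, hAc, smul_smul, ← pow_add, hgit]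
      congr 1
      apply Stmt8.pow_neg_parity
      have hsum : Stmt8.Finv l c + Stmt8.Finv c l = l.length * c.length := by
        rw [Stmt8.Finv_eq_Ginv c l]
        exact Stmt8.FG_total hdisj
      rw [hsum]
      have hlen' : l.length + c.length = n := hlen
      revert hlen'
      generalize l.length = p
      generalize c.length = q
      intro hlen'
      rw [← hlen']
      have hid : (p + q + 1) * p = p * q + p * (p + 1) := by ring
      rw [hid]
      obtain ⟨k, hk⟩ := Nat.even_mul_succ_self p
      rw [hk]
      generalize p * q = A
      omega
  | zero =>
    refine ⟨?_, ?_, ?_, ?_⟩ <;>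
      simp [Stmt8.giter_zero]
  | add x y hx hy ihx ihy =>
    obtain ⟨h1x, h2x, h3x, h4x⟩ := ihx
    obtain ⟨h1y, h2y, h3y, h4y⟩ := ihy
    refine ⟨?_, ?_, ?_, ?_⟩
    · rw [map_add, LinearMap.add_apply, map_add, h1x, h1y]
    · rw [map_add, map_add, LinearMap.add_apply, h2x, h2y]
    · rw [map_add, map_add, h3x, h3y, Stmt8.giter_add]
    · rw [map_add, LinearMap.add_apply, map_add, LinearMap.add_apply, h4x, h4y,
        Stmt8.giter_add]
  | smul r x hx ihx =>
    obtain ⟨h1, h2, h3, h4⟩ := ihx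
    refine ⟨?_, ?_, ?_, ?_⟩
    · rw [map_smul, LinearMap.smul_apply, map_smul, h1]
    · rw [map_smul, map_smul, LinearMap.smul_apply, h2]
    · rw [map_smul, map_smul, h3, Stmt8.giter_smul]
    · rw [map_smul, LinearMap.smul_apply, map_smul, LinearMap.smul_apply, h4,
        Stmt8.giter_smul]
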